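/- Suppose a₂ : ℝ → ℝ is a C² solution of ä₂ = −(Lc)²·∂U/∂a₂ with constraint (1/2)ȧ₂² + (Lc)²·U = c²/2, where near a purported singularity U is dominated by 2/a₂², i.e. a₂ satisfies ä₂ = 4(Lc)²/a₂³ with first integral (1/2)ȧ₂² + 2(Lc)²/a₂² = ε². Then a₂(t) = √(2ε²(t−t₀)² + 2(Lc)²/ε²) and a₂ is bounded below by the positive constant √2·Lc/|ε|, so a₂ never reaches zero (no Big Bang/Big Crunch singularity for the purely quantum universe). -/

import Mathlib

open Real

theorem purely_quantum_universe_no_singularity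
    (L c ε : ℝ) (hL : 0 < L) (hc : 0 < c) (hε : ε ≠ 0)
    (a₂ : ℝ → ℝ) (ha : ContDiff ℝ 2 a₂) (hpos : ∀ t, 0 < a₂ t)
    (hode : ∀ t, deriv (deriv a₂) t = 4 * (L * c) ^ 2 / (a₂ t) ^ 3)
    (henergy : ∀ t, (1/2) * (deriv a₂ t) ^ 2 + 2 * (L * c) ^ 2 / (a₂ t) ^ 2 = ε ^ 2) :
    ∃ t₀ : ℝ,
      (∀ t, a₂ t = Real.sqrt (2 * ε ^ 2 * (t - t₀) ^ 2 + 2 * (L * c) ^ 2 / ε ^ 2)) ∧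
      (∀ t, Real.sqrt 2 * L * c / |ε| ≤ a₂ t) ∧ 0 < Real.sqrt 2 * L * c / |ε| := by
  set K := (L * c) ^ 2 with hKdef
  have hK : 0 < K := by positivity
  have hε2 : (ε : ℝ) ^ 2 ≠ 0 := pow_ne_zero _ hε
  have hane : ∀ t, a₂ t ≠ 0 := fun t => (hpos t).ne'
  have hd1 : Differentiable ℝ a₂ := ha.differentiable (by norm_num)
  have hd2 : Differentiable ℝ (deriv a₂) := by
    have h1 : ContDiff ℝ ((1:ℕ∞)+1) a₂ := by exact_mod_cast ha
    exact (contDiff_succ_iff_deriv.mp h1).2.2.differentiable (by norm_num)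
  have hda : ∀ t, HasDerivAt a₂ (deriv a₂ t) t := fun t => (hd1 t).hasDerivAt
  have hdda : ∀ t, HasDerivAt (deriv a₂) (4 * K / (a₂ t) ^ 3) t := fun t => by
    have := (hd2 t).hasDerivAt
    rwa [hode t] at this
  -- f = a₂²
  set f : ℝ → ℝ := fun t => (a₂ t) ^ 2 with hfdef
  set f' : ℝ → ℝ := fun t => 2 * a₂ t * deriv a₂ t with hf'def
  have hf : ∀ t, HasDerivAt f (f' t) t := fun t => by
    have := (hda t).pow 2
    exact this.congr_deriv (by simp only [hf'def]; norm_num <;> ring)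
  have hf' : ∀ t, HasDerivAt f' (4 * ε ^ 2) t := fun t => by
    have h := ((hda t).const_mul 2).mul (hdda t)
    have hval : 2 * deriv a₂ t * deriv a₂ t + 2 * a₂ t * (4 * K / (a₂ t) ^ 3)
        = 4 * ε ^ 2 := by
      have h0 := hane t
      have h8 : 2 * a₂ t * (4 * K / (a₂ t) ^ 3) = 8 * K / (a₂ t) ^ 2 := by
        field_simp; ring
      have hd : deriv a₂ t ^ 2 = 2 * ε ^ 2 - 4 * K / (a₂ t) ^ 2 := by
        linear_combination 2 * henergy t
      rw [h8]; linear_combination 2 * hd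
    exact h.congr_deriv hval
  set B := f' 0 with hBdef
  set C := f 0 with hCdef
  -- g' t := f' t − (4ε² t + B) is constant zero
  have hg' : ∀ t, f' t = 4 * ε ^ 2 * t + B := by
    intro t
    have hgd : ∀ s, HasDerivAt (fun u => f' u - (4 * ε ^ 2 * u + B)) 0 s := fun s => by
      have := (hf' s).sub (((hasDerivAt_id s).const_mul (4 * ε ^ 2)).add_const B)
      exact this.congr_deriv (by ring)
    have hconst := is_const_of_deriv_eq_zero
      (f := fun u => f' u - (4 * ε ^ 2 * u + B))
      (fun s => (hgd s).differentiableAt) (fun s => (hgd s).deriv) t 0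
    simp only [hBdef] at hconst ⊢
    nlinarith [hconst]
  have hg : ∀ t, f t = 2 * ε ^ 2 * t ^ 2 + B * t + C := by
    intro t
    have hgd : ∀ s, HasDerivAt (fun u => f u - (2 * ε ^ 2 * u ^ 2 + B * u + C)) 0 s := by
      intro s
      have h1 : HasDerivAt (fun u : ℝ => 2 * ε ^ 2 * u ^ 2 + B * u + C)
          (4 * ε ^ 2 * s + B) s := by
        have := ((((hasDerivAt_id s).pow 2).const_mul (2 * ε ^ 2)).add
          ((hasDerivAt_id s).const_mul B)).add_const C
        refine this.congr_deriv ?_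
        norm_num <;> ring
      have := (hf s).sub h1
      rw [hg' s] at this
      exact this.congr_deriv (by ring)
    have hconst := is_const_of_deriv_eq_zero
      (f := fun u => f u - (2 * ε ^ 2 * u ^ 2 + B * u + C))
      (fun s => (hgd s).differentiableAt) (fun s => (hgd s).deriv) t 0
    simp only [hCdef] at hconst ⊢
    nlinarith [hconst]
  have hCpos : 0 < C := by simpa [hCdef, hfdef] using pow_pos (hpos 0) 2
  -- B² = 8ε²C − 16K
  have hBC : B ^ 2 = 8 * ε ^ 2 * C - 16 * K := by
    have he := henergy 0
    have h2 : (a₂ 0) ^ 2 ≠ 0 := pow_ne_zero _ (hane 0)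
    have hB : B = 2 * a₂ 0 * deriv a₂ 0 := rfl
    have hC : C = (a₂ 0) ^ 2 := rfl
    have h3 := hane 0
    field_simp at he
    rw [hB, hC]
    linear_combination 4 * he
  refine ⟨-B / (4 * ε ^ 2), ?_, ?_, div_pos (by positivity) (abs_pos.mpr hε)⟩
  · intro t
    have hft : f t = 2 * ε ^ 2 * (t - -B / (4 * ε ^ 2)) ^ 2 + 2 * K / ε ^ 2 := by
      rw [hg t]
      field_simp
      nlinarith [hBC]
    have : a₂ t = Real.sqrt (f t) := by
      rw [hfdef]
      exact (Real.sqrt_sq (hpos t).le).symm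
    rw [this, hft]
  · intro t
    have hft : 2 * K / ε ^ 2 ≤ f t := by
      have hft2 : f t = 2 * ε ^ 2 * (t - -B / (4 * ε ^ 2)) ^ 2 + 2 * K / ε ^ 2 := by
        rw [hg t]; field_simp; nlinarith [hBC]
      have h9 : 0 ≤ 2 * ε ^ 2 * (t - -B / (4 * ε ^ 2)) ^ 2 := by positivity
      rw [hft2]; linarith
    have h1 : a₂ t = Real.sqrt (f t) := (Real.sqrt_sq (hpos t).le).symm
    have h2 : Real.sqrt 2 * L * c / |ε| = Real.sqrt (2 * K / ε ^ 2) := by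
      rw [hKdef, show (2 : ℝ) * (L*c)^2 / ε^2 = 2 * ((L*c)/|ε|)^2 by
        rw [div_pow, sq_abs]; ring, Real.sqrt_mul (by norm_num),
        Real.sqrt_sq (by positivity)]
      ring
    rw [h1, h2]
    exact Real.sqrt_le_sqrt hft
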